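/- For every integer k ≥ 1 and every integer s ≥ 1, if a k-uniform [1,s]-almost intersecting multihypergraph F has exactly s·(2k choose k) edges (counted with multiplicity), then for any two edges X and Y of F, either the sub-multiset of edges of F disjoint from X is equal to the sub-multiset of edges of F disjoint from Y, or no edge of F is disjoint from both X and Y. -/

import Mathlib

open Finset Equiv

namespace Stmt3Aux

def lowIdx (k : ℕ) : Finset (Fin (2*k)) :=
  (Finset.range k).attachFin (by intro m hm; have := Finset.mem_range.1 hm; omega)

lemma mem_lowIdx {k : ℕ} {i : Fin (2*k)} : i ∈ lowIdx k ↔ (i : ℕ) < k := by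
  simp [lowIdx, Finset.mem_attachFin]

lemma card_lowIdx (k : ℕ) : (lowIdx k).card = k := by
  simp [lowIdx, Finset.card_attachFin]

noncomputable def tauE1 {k : ℕ} (r : Finset (Fin (2*k))) (hr : r.card = k) :
    {x // x ∈ r} ≃ {x // x ∈ lowIdx k} :=
  Finset.equivOfCardEq (hr.trans (card_lowIdx k).symm)

noncomputable def tauE2 {k : ℕ} (r : Finset (Fin (2*k))) (hr : r.card = k) :
    {x // ¬ x ∈ r} ≃ {x // ¬ x ∈ lowIdx k} :=
  (Equiv.subtypeEquivRight (fun x => (Finset.mem_compl (s := r) (a := x)).symm)).trans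
    ((Finset.equivOfCardEq (by simp [Finset.card_compl, hr, card_lowIdx])).trans
      (Equiv.subtypeEquivRight (fun x => (Finset.mem_compl (s := lowIdx k) (a := x)))))

noncomputable def tau {k : ℕ} (r : Finset (Fin (2*k))) (hr : r.card = k) :
    Equiv.Perm (Fin (2*k)) :=
  (Equiv.sumCompl (· ∈ r)).symm.trans
    ((Equiv.sumCongr (tauE1 r hr) (tauE2 r hr)).trans (Equiv.sumCompl (· ∈ lowIdx k)))

lemma tau_mem_iff {k : ℕ} {r : Finset (Fin (2*k))} (hr : r.card = k) (i : Fin (2*k)) :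
    tau r hr i ∈ lowIdx k ↔ i ∈ r := by
  by_cases hi : i ∈ r
  · simp only [tau, Equiv.trans_apply, Equiv.sumCompl_symm_apply_of_pos hi,
      Equiv.sumCongr_apply, Sum.map_inl, Equiv.sumCompl_apply_inl]
    exact iff_of_true ((tauE1 r hr ⟨i, hi⟩).2) hi
  · simp only [tau, Equiv.trans_apply, Equiv.sumCompl_symm_apply_of_neg hi,
      Equiv.sumCongr_apply, Sum.map_inr, Equiv.sumCompl_apply_inr]
    exact iff_of_false ((tauE2 r hr ⟨i, hi⟩).2) hi


variable {k m : ℕ}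

noncomputable def rho (r : Finset (Fin (2*k))) (hr : r.card = k)
    (T : Finset (Fin m)) (hT : T.card = 2*k) : Equiv.Perm (Fin m) :=
  Equiv.Perm.subtypeCongr
    ((T.orderIsoOfFin hT).toEquiv.symm.trans ((tau r hr).trans (T.orderIsoOfFin hT).toEquiv))
    (Equiv.refl {x // ¬ x ∈ T})

lemma rho_apply_of_mem {r : Finset (Fin (2*k))} (hr : r.card = k)
    {T : Finset (Fin m)} (hT : T.card = 2*k) {x : Fin m} (hx : x ∈ T) :
    rho r hr T hT x = ↑(T.orderIsoOfFin hT (tau r hr ((T.orderIsoOfFin hT).symm ⟨x, hx⟩))) := by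
  rw [rho, Equiv.Perm.subtypeCongr.left_apply _ _ hx]
  rfl

lemma rho_apply_of_not_mem {r : Finset (Fin (2*k))} (hr : r.card = k)
    {T : Finset (Fin m)} (hT : T.card = 2*k) {x : Fin m} (hx : ¬ x ∈ T) :
    rho r hr T hT x = x := by
  rw [rho, Equiv.Perm.subtypeCongr.right_apply _ _ hx]
  rfl

lemma rho_mem {r : Finset (Fin (2*k))} (hr : r.card = k)
    {T : Finset (Fin m)} (hT : T.card = 2*k) {x : Fin m} (hx : x ∈ T) :
    rho r hr T hT x ∈ T := by
  rw [rho_apply_of_mem hr hT hx]; exact Subtype.prop _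

/-- the image inside `Fin m` of an index set `r` via the order-iso of `T` -/
def SofT (r : Finset (Fin (2*k))) (T : Finset (Fin m)) (hT : T.card = 2*k) : Finset (Fin m) :=
  r.image (fun i => ↑(T.orderIsoOfFin hT i))

lemma mem_SofT {r : Finset (Fin (2*k))} {T : Finset (Fin m)} {hT : T.card = 2*k} {x : Fin m} :
    x ∈ SofT r T hT ↔ ∃ h : x ∈ T, (T.orderIsoOfFin hT).symm ⟨x, h⟩ ∈ r := by
  constructor
  · rintro hx
    obtain ⟨i, hi, rfl⟩ := Finset.mem_image.1 hx
    refine ⟨Subtype.prop _, ?_⟩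
    have he : (⟨((T.orderIsoOfFin hT) i : Fin m), Subtype.prop _⟩ : {x // x ∈ T}) =
        (T.orderIsoOfFin hT) i := rfl
    rw [he, OrderIso.symm_apply_apply]
    exact hi
  · rintro ⟨h, hi⟩
    exact Finset.mem_image.2 ⟨_, hi, by simp⟩

lemma SofT_subset {r : Finset (Fin (2*k))} {T : Finset (Fin m)} {hT : T.card = 2*k} :
    SofT r T hT ⊆ T := by
  intro x hx
  obtain ⟨i, _, rfl⟩ := Finset.mem_image.1 hx
  exact Subtype.prop _

lemma rho_lt {r : Finset (Fin (2*k))} (hr : r.card = k)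
    {T : Finset (Fin m)} (hT : T.card = 2*k) {b a : Fin m}
    (hb : b ∈ SofT r T hT) (haT : a ∈ T) (ha : ¬ a ∈ SofT r T hT) :
    rho r hr T hT b < rho r hr T hT a := by
  obtain ⟨hbT, hbr⟩ := mem_SofT.1 hb
  have har : ¬ (T.orderIsoOfFin hT).symm ⟨a, haT⟩ ∈ r := by
    intro h
    exact ha (mem_SofT.2 ⟨haT, h⟩)
  rw [rho_apply_of_mem hr hT hbT, rho_apply_of_mem hr hT haT]
  have h1 : ((tau r hr ((T.orderIsoOfFin hT).symm ⟨b, hbT⟩)) : ℕ) < k :=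
    mem_lowIdx.1 ((tau_mem_iff hr _).2 hbr)
  have h2 : ¬ ((tau r hr ((T.orderIsoOfFin hT).symm ⟨a, haT⟩)) : ℕ) < k := by
    intro h
    exact har ((tau_mem_iff hr _).1 (mem_lowIdx.2 h))
  have hlt : (tau r hr ((T.orderIsoOfFin hT).symm ⟨b, hbT⟩)) <
      (tau r hr ((T.orderIsoOfFin hT).symm ⟨a, haT⟩)) := by
    rw [Fin.lt_def]; omega
  exact Subtype.coe_lt_coe.2 ((T.orderIsoOfFin hT).lt_iff_lt.2 hlt)



open scoped Classical

variable {α : Type*} [DecidableEq α]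

noncomputable def pfin (V : Finset α) (hm : 0 < V.card)
    (π : {x // x ∈ V} ≃ Fin V.card) (x : α) : Fin V.card :=
  if h : x ∈ V then π ⟨x, h⟩ else ⟨0, hm⟩

def ppos (V : Finset α) (π : {x // x ∈ V} ≃ Fin V.card) (x : α) : ℕ :=
  if h : x ∈ V then (π ⟨x, h⟩ : ℕ) else 0

lemma ppos_eq (V : Finset α) (hm : 0 < V.card) (π : {x // x ∈ V} ≃ Fin V.card)
    {x : α} (hx : x ∈ V) : ppos V π x = (pfin V hm π x : ℕ) := by
  simp [ppos, pfin, hx]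

lemma pfin_injOn (V : Finset α) (hm : 0 < V.card) (π : {x // x ∈ V} ≃ Fin V.card) :
    Set.InjOn (pfin V hm π) ↑V := by
  intro x hx y hy h
  simp only [Finset.mem_coe] at hx hy
  simp only [pfin, dif_pos hx, dif_pos hy] at h
  exact congrArg Subtype.val (π.injective h)

lemma P1 {k : ℕ} (hk : 1 ≤ k) (V A B : Finset α) (hA : A ⊆ V) (hB : B ⊆ V)
    (hAk : A.card = k) (hBk : B.card = k) (hd : Disjoint A B) :
    V.card.factorial ≤ (2*k).choose k *
      (Finset.univ.filter (fun π : ({x // x ∈ V} ≃ Fin V.card) =>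
        ∀ b ∈ B, ∀ a ∈ A, ppos V π b < ppos V π a)).card := by
  classical
  have hm : 0 < V.card := lt_of_lt_of_le (hAk ▸ hk) (Finset.card_le_card hA)
  set m := V.card with hmdef
  set Ω := ({x // x ∈ V} ≃ Fin m) with hΩ
  set E : Finset Ω := Finset.univ.filter (fun π : Ω =>
    ∀ b ∈ B, ∀ a ∈ A, ppos V π b < ppos V π a) with hE
  have hABsub : A ∪ B ⊆ V := Finset.union_subset hA hB
  have hABcard : (A ∪ B).card = 2*k := by
    rw [Finset.card_union_of_disjoint hd, hAk, hBk]; omega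
  -- local data
  set Tof : Ω → Finset (Fin m) := fun π => (A ∪ B).image (pfin V hm π) with hTof
  have hTcard : ∀ π : Ω, (Tof π).card = 2*k := by
    intro π
    rw [hTof]
    rw [Finset.card_image_of_injOn (Set.InjOn.mono (by exact_mod_cast hABsub) (pfin_injOn V hm π))]
    exact hABcard
  set Sof' : Ω → Finset (Fin m) := fun π => B.image (pfin V hm π) with hSof'
  have hSsub : ∀ π : Ω, Sof' π ⊆ Tof π := by
    intro π
    exact Finset.image_subset_image Finset.subset_union_right
  set rof : Ω → Finset (Fin (2*k)) := fun π =>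
    Finset.univ.filter (fun i => ↑((Tof π).orderIsoOfFin (hTcard π) i) ∈ Sof' π) with hrof
  -- roundtrip : SofT (rof π) (Tof π) = Sof' π
  have hround : ∀ π : Ω, SofT (rof π) (Tof π) (hTcard π) = Sof' π := by
    intro π
    ext x
    rw [mem_SofT]
    constructor
    · rintro ⟨hxT, hi⟩
      rw [hrof] at hi
      simp only [Finset.mem_filter, Finset.mem_univ, true_and] at hi
      rwa [OrderIso.apply_symm_apply] at hi
    · intro hx
      have hxT : x ∈ Tof π := hSsub π hx
      refine ⟨hxT, ?_⟩
      rw [hrof]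
      simp only [Finset.mem_filter, Finset.mem_univ, true_and]
      rwa [OrderIso.apply_symm_apply]
    
  have hrcard : ∀ π : Ω, (rof π).card = k := by
    intro π
    have himg : (rof π).image (fun i => ↑((Tof π).orderIsoOfFin (hTcard π) i)) = Sof' π :=
      hround π
    have hinj : Set.InjOn (fun i => (((Tof π).orderIsoOfFin (hTcard π) i : Fin m))) ↑(rof π) := by
      intro i _ j _ h
      exact (Finset.orderIsoOfFin _ _).injective (Subtype.coe_injective h)
    have hcB : (Sof' π).card = k := by
      rw [hSof']
      rw [Finset.card_image_of_injOn (Set.InjOn.mono (by exact_mod_cast hB) (pfin_injOn V hm π))]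
      exact hBk
    have hci := Finset.card_image_of_injOn hinj
    rw [himg] at hci
    exact hci.symm.trans hcB
  -- total version of rho
  set rho'' : Finset (Fin (2*k)) → Finset (Fin m) → Equiv.Perm (Fin m) := fun r T =>
    if h : r.card = k ∧ T.card = 2*k then rho r h.1 T h.2 else 1 with hrho''
  set recov : Finset (Fin (2*k)) → Ω → Ω := fun r σ => σ.trans (rho'' r (Tof σ)).symm with hrecov
  -- coverage
  have hcover : (Finset.univ : Finset Ω) ⊆
      (Finset.powersetCard k (Finset.univ : Finset (Fin (2*k)))).biUnion
        (fun r => E.image (recov r)) := by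
    intro π _
    rw [Finset.mem_biUnion]
    refine ⟨rof π, Finset.mem_powersetCard_univ.2 (hrcard π), ?_⟩
    set ρ : Equiv.Perm (Fin m) := rho (rof π) (hrcard π) (Tof π) (hTcard π) with hρ
    set π' : Ω := π.trans ρ with hπ'
    have hpf : ∀ x ∈ A ∪ B, pfin V hm π' x = ρ (pfin V hm π x) := by
      intro x hx
      have hxV : x ∈ V := hABsub hx
      simp [pfin, dif_pos hxV, hπ']
    have hTπ' : Tof π' = Tof π := by
      have h1 : Tof π' = (Tof π).image ρ := by
        rw [hTof]
        rw [Finset.image_image]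
        exact Finset.image_congr (fun x hx => hpf x hx)
      rw [h1]
      apply Finset.eq_of_subset_of_card_le
      · intro y hy
        obtain ⟨x, hx, rfl⟩ := Finset.mem_image.1 hy
        exact rho_mem _ _ hx
      · rw [Finset.card_image_of_injective _ ρ.injective]
    have hρ'' : rho'' (rof π) (Tof π') = ρ := by
      rw [hTπ']
      simp only [hrho'']
      rw [dif_pos ⟨hrcard π, hTcard π⟩]
    have hπ'E : π' ∈ E := by
      rw [hE, Finset.mem_filter]
      refine ⟨Finset.mem_univ _, ?_⟩
      intro b hb a ha
      have hbV : b ∈ V := hB hb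
      have haV : a ∈ V := hA ha
      rw [ppos_eq V hm π' hbV, ppos_eq V hm π' haV,
        hpf b (Finset.mem_union_right _ hb), hpf a (Finset.mem_union_left _ ha)]
      have hbS : pfin V hm π b ∈ SofT (rof π) (Tof π) (hTcard π) := by
        rw [hround π, hSof']
        exact Finset.mem_image_of_mem _ hb
      have haT : pfin V hm π a ∈ Tof π := by
        rw [hTof]
        exact Finset.mem_image_of_mem _ (Finset.mem_union_left _ ha)
      have haS : ¬ pfin V hm π a ∈ SofT (rof π) (Tof π) (hTcard π) := by
        rw [hround π, hSof']
        intro hmem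
        obtain ⟨b', hb', heq⟩ := Finset.mem_image.1 hmem
        have : a = b' := pfin_injOn V hm π (by exact_mod_cast haV)
          (by exact_mod_cast hB hb') heq.symm
        exact (Finset.disjoint_left.1 hd ha) (this ▸ hb')
      exact_mod_cast rho_lt (hrcard π) (hTcard π) hbS haT haS
    refine Finset.mem_image.2 ⟨π', hπ'E, ?_⟩
    rw [hrecov]
    simp only
    rw [hρ'']
    ext x
    simp [hπ']
  -- counting
  have hcΩ : Fintype.card Ω = m.factorial := by
    have hcq := Fintype.card_equiv
      ((Fintype.equivFinOfCardEq (Fintype.card_coe V)) : {x // x ∈ V} ≃ Fin m)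
    rwa [Fintype.card_coe] at hcq
  calc m.factorial = Fintype.card Ω := hcΩ.symm
    _ = (Finset.univ : Finset Ω).card := (Finset.card_univ).symm
    _ ≤ ((Finset.powersetCard k (Finset.univ : Finset (Fin (2*k)))).biUnion
        (fun r => E.image (recov r))).card := Finset.card_le_card hcover
    _ ≤ ∑ r ∈ Finset.powersetCard k (Finset.univ : Finset (Fin (2*k))),
          (E.image (recov r)).card := Finset.card_biUnion_le
    _ ≤ ∑ r ∈ Finset.powersetCard k (Finset.univ : Finset (Fin (2*k))), E.card := by
        exact Finset.sum_le_sum (fun r _ => Finset.card_image_le)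
    _ = (2*k).choose k * E.card := by
        rw [Finset.sum_const, Finset.card_powersetCard, Finset.card_univ, Fintype.card_fin,
          smul_eq_mul]

lemma sum_countP {ι β : Type*} (s : Finset ι) (G : Multiset β) (g : ι → β → Prop)
    [∀ i, DecidablePred (g i)] [∀ A : β, DecidablePred (fun i => g i A)] :
    ∑ i ∈ s, Multiset.countP (g i) G
      = (G.map (fun A => (s.filter (fun i => g i A)).card)).sum := by
  induction G using Multiset.induction_on with
  | empty => simp
  | cons a t ih =>
    simp only [Multiset.countP_cons, Multiset.map_cons, Multiset.sum_cons,
      Finset.sum_add_distrib, ih]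
    rw [add_comm, Finset.card_filter]

end Stmt3Aux

theorem stmt_3 {α : Type*} [DecidableEq α] (k s : ℕ) (hk : 1 ≤ k) (hs : 1 ≤ s)
    (F : Multiset (Finset α))
    (huniform : ∀ A ∈ F, A.card = k)
    (hai : ∀ A ∈ F,
      1 ≤ Multiset.card (F.filter fun B => Disjoint A B) ∧
      Multiset.card (F.filter fun B => Disjoint A B) ≤ s)
    (hcard : Multiset.card F = s * Nat.choose (2 * k) k) :
    ∀ X ∈ F, ∀ Y ∈ F,
      (F.filter fun B => Disjoint X B) = (F.filter fun B => Disjoint Y B) ∨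
      ∀ B ∈ F, ¬(Disjoint X B ∧ Disjoint Y B) := by
  classical
  have key : ∀ A ∈ F, ∀ B ∈ F, ∀ C ∈ F, Disjoint A B → Disjoint A C → B = C := by
    intro A₀ hA₀ B₀ hB₀ C₀ hC₀ hAB₀ hAC₀
    by_contra hne
    set V : Finset α := F.toFinset.sup id with hV
    have hsub : ∀ A ∈ F, A ⊆ V := by
      intro A hA
      have := Finset.le_sup (f := id) (Multiset.mem_toFinset.2 hA)
      simpa using this
    set m := V.card with hm'
    have hm : 0 < m := by
      have h1 : 0 < A₀.card := by rw [huniform A₀ hA₀]; omega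
      exact lt_of_lt_of_le h1 (Finset.card_le_card (hsub A₀ hA₀))
    set C := (2*k).choose k with hCdef
    have hCpos : 0 < C := Nat.choose_pos (by omega)
    set q : ({x // x ∈ V} ≃ Fin m) → Finset α → Prop := fun π A =>
      ∃ B ∈ F, Disjoint A B ∧ ∀ b ∈ B, ∀ a ∈ A,
        Stmt3Aux.ppos V π b < Stmt3Aux.ppos V π a with hq
    -- Step 1 : for each order, at most `s` edges are preceded by a disjoint edge
    have step1 : ∀ π : {x // x ∈ V} ≃ Fin m, Multiset.countP (q π) F ≤ s := by
      intro π
      by_cases h0 : Multiset.filter (q π) F = 0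
      · rw [Multiset.countP_eq_card_filter, h0]; simp
      · obtain ⟨A₁, hA₁⟩ := Multiset.exists_mem_of_ne_zero h0
        have hA₁F := (Multiset.mem_filter.1 hA₁).1
        have hA₁q := (Multiset.mem_filter.1 hA₁).2
        set U : Finset α := V.filter (fun x => ∃ A ∈ F, q π A ∧ x ∈ A) with hU
        have hUne : U.Nonempty := by
          obtain ⟨a, ha⟩ := Finset.card_pos.1
            (show 0 < A₁.card by rw [huniform A₁ hA₁F]; omega)
          exact ⟨a, Finset.mem_filter.2 ⟨hsub A₁ hA₁F ha, A₁, hA₁F, hA₁q, ha⟩⟩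
        obtain ⟨x₀, hx₀U, hx₀min⟩ := Finset.exists_min_image U (Stmt3Aux.ppos V π) hUne
        obtain ⟨hx₀V, A₂, hA₂F, hA₂q, hx₀A₂⟩ := Finset.mem_filter.1 hx₀U
        obtain ⟨B₂, hB₂F, hdisj₂, hbef₂⟩ := hA₂q
        have hkey : ∀ A ∈ F, q π A → Disjoint B₂ A := by
          intro A hAF hqA
          rw [Finset.disjoint_left]
          intro t htB₂ htA
          have h1 : Stmt3Aux.ppos V π t < Stmt3Aux.ppos V π x₀ := hbef₂ t htB₂ x₀ hx₀A₂
          have h2 : Stmt3Aux.ppos V π x₀ ≤ Stmt3Aux.ppos V π t :=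
            hx₀min t (Finset.mem_filter.2 ⟨hsub A hAF htA, A, hAF, hqA, htA⟩)
          omega
        have hle : Multiset.filter (q π) F ≤ Multiset.filter (fun X => Disjoint B₂ X) F :=
          Multiset.le_filter.2 ⟨Multiset.filter_le _ _, fun A hA =>
            hkey A (Multiset.mem_filter.1 hA).1 (Multiset.mem_filter.1 hA).2⟩
        rw [Multiset.countP_eq_card_filter]
        exact le_trans (Multiset.card_le_card hle) (hai B₂ hB₂F).2
    -- lower bound for every edge
    have hlow : ∀ A ∈ F, m.factorial ≤ C * (Finset.univ.filter (fun π => q π A)).card := by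
      intro A hAF
      have h1 : Multiset.filter (fun B => Disjoint A B) F ≠ 0 := by
        intro h
        have := (hai A hAF).1
        rw [h] at this
        simp at this
      obtain ⟨B, hB⟩ := Multiset.exists_mem_of_ne_zero h1
      have hBF := (Multiset.mem_filter.1 hB).1
      have hABdisj := (Multiset.mem_filter.1 hB).2
      have hP1 := Stmt3Aux.P1 hk V A B (hsub A hAF) (hsub B hBF)
        (huniform A hAF) (huniform B hBF) hABdisj
      refine le_trans hP1 (Nat.mul_le_mul_left _ (Finset.card_le_card ?_))
      refine Finset.monotone_filter_right _ ?_
      intro π _ hbef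
      exact ⟨B, hBF, hABdisj, hbef⟩
    -- strict lower bound for A₀
    have hlow0 : m.factorial + 1 ≤ C * (Finset.univ.filter (fun π => q π A₀)).card := by
      set e0 : {x // x ∈ V} ≃ Fin m := Fintype.equivFinOfCardEq (Fintype.card_coe V) with he0
      set g : {x // x ∈ V} → ℕ := fun x => if (x:α) ∈ C₀ then 0 else if (x:α) ∈ A₀ then 1 else 2
        with hg
      set σ := Tuple.sort (g ∘ e0.symm) with hσ
      set πs : {x // x ∈ V} ≃ Fin m := e0.trans σ.symm with hπs
      have hmono : ∀ x y, g x < g y → πs x < πs y := by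
        intro x y hgy
        by_contra hle
        push_neg at hle
        have h2 := Tuple.monotone_sort (g ∘ e0.symm) hle
        rw [← hσ] at h2
        have hx : σ (πs x) = e0 x := by simp [hπs]
        have hy : σ (πs y) = e0 y := by simp [hπs]
        simp only [Function.comp_apply, hx, hy, Equiv.symm_apply_apply] at h2
        omega
      have hqs : q πs A₀ := by
        refine ⟨C₀, hC₀, hAC₀, ?_⟩
        intro c hc a ha
        have hcV : c ∈ V := hsub C₀ hC₀ hc
        have haV : a ∈ V := hsub A₀ hA₀ ha
        have hgc : g ⟨c, hcV⟩ = 0 := by simp [hg, hc]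
        have hga : g ⟨a, haV⟩ = 1 := by
          have hnc : a ∉ C₀ := Finset.disjoint_left.1 hAC₀ ha
          simp [hg, hnc, ha]
        have hlt : πs ⟨c, hcV⟩ < πs ⟨a, haV⟩ := hmono _ _ (by omega)
        simp only [Stmt3Aux.ppos, dif_pos hcV, dif_pos haV]
        exact_mod_cast hlt
      obtain ⟨x₁, hx₁B, hx₁C⟩ : ∃ x ∈ B₀, x ∉ C₀ := by
        by_contra hsubB
        push_neg at hsubB
        exact hne (Finset.eq_of_subset_of_card_le hsubB
          (by rw [huniform B₀ hB₀, huniform C₀ hC₀]))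
      obtain ⟨a₀, ha₀⟩ := Finset.card_pos.1
        (show 0 < A₀.card by rw [huniform A₀ hA₀]; omega)
      have hnotE : ¬ (∀ b ∈ B₀, ∀ a ∈ A₀,
          Stmt3Aux.ppos V πs b < Stmt3Aux.ppos V πs a) := by
        intro hbef
        have h1 := hbef x₁ hx₁B a₀ ha₀
        have hxV : x₁ ∈ V := hsub B₀ hB₀ hx₁B
        have haV : a₀ ∈ V := hsub A₀ hA₀ ha₀
        have hgx : g ⟨x₁, hxV⟩ = 2 := by
          have hnA : x₁ ∉ A₀ := Finset.disjoint_right.1 hAB₀ hx₁B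
          simp [hg, hx₁C, hnA]
        have hga : g ⟨a₀, haV⟩ = 1 := by
          have hnc : a₀ ∉ C₀ := Finset.disjoint_left.1 hAC₀ ha₀
          simp [hg, hnc, ha₀]
        have hlt : πs ⟨a₀, haV⟩ < πs ⟨x₁, hxV⟩ := hmono _ _ (by omega)
        rw [Stmt3Aux.ppos, Stmt3Aux.ppos, dif_pos hxV, dif_pos haV] at h1
        have : (πs ⟨a₀, haV⟩ : ℕ) < (πs ⟨x₁, hxV⟩ : ℕ) := hlt
        omega
      have hP1 := Stmt3Aux.P1 hk V A₀ B₀ (hsub A₀ hA₀) (hsub B₀ hB₀)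
        (huniform A₀ hA₀) (huniform B₀ hB₀) hAB₀
      rw [← hCdef] at hP1
      set E' := Finset.univ.filter (fun π : {x // x ∈ V} ≃ Fin m =>
        ∀ b ∈ B₀, ∀ a ∈ A₀, Stmt3Aux.ppos V π b < Stmt3Aux.ppos V π a) with hE'
      have hπsE' : πs ∉ E' := by
        rw [hE', Finset.mem_filter]
        intro h
        exact hnotE h.2
      have hsubI : insert πs E' ⊆ Finset.univ.filter (fun π => q π A₀) := by
        intro π hπ
        rcases Finset.mem_insert.1 hπ with rfl | hπE
        · exact Finset.mem_filter.2 ⟨Finset.mem_univ _, hqs⟩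
        · have hbef := (Finset.mem_filter.1 hπE).2
          exact Finset.mem_filter.2 ⟨Finset.mem_univ _, B₀, hB₀, hAB₀, hbef⟩
      have hc1 : E'.card + 1 ≤ (Finset.univ.filter (fun π => q π A₀)).card := by
        rw [← Finset.card_insert_of_notMem hπsE']
        exact Finset.card_le_card hsubI
      calc m.factorial + 1 ≤ C * E'.card + C := by
            have h8 := hCpos
            have h9 : m.factorial ≤ C * E'.card := hP1
            omega
        _ = C * (E'.card + 1) := by ring
        _ ≤ C * (Finset.univ.filter (fun π => q π A₀)).card := Nat.mul_le_mul_left _ hc1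
    -- combine all bounds
    have hcΩ : Fintype.card ({x // x ∈ V} ≃ Fin m) = m.factorial := by
      have hcq := Fintype.card_equiv
        ((Fintype.equivFinOfCardEq (Fintype.card_coe V)) : {x // x ∈ V} ≃ Fin m)
      rwa [Fintype.card_coe] at hcq
    have hswap := Stmt3Aux.sum_countP (Finset.univ : Finset ({x // x ∈ V} ≃ Fin m)) F
      (fun π A => q π A)
    have hW1 : ∑ π : {x // x ∈ V} ≃ Fin m, Multiset.countP (q π) F ≤ m.factorial * s := by
      calc ∑ π : {x // x ∈ V} ≃ Fin m, Multiset.countP (q π) F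
          ≤ (Finset.univ : Finset ({x // x ∈ V} ≃ Fin m)).card • s :=
            Finset.sum_le_card_nsmul _ _ _ (fun π _ => step1 π)
        _ = m.factorial * s := by rw [Finset.card_univ, hcΩ, smul_eq_mul]
    set cnt : Finset α → ℕ := fun A => (Finset.univ.filter (fun π => q π A)).card with hcnt
    set n := Multiset.card F with hn
    have hn1 : 1 ≤ n := by
      rw [hcard]
      exact Nat.mul_pos (by omega) hCpos
    -- upper bound on L := sum of C * cnt over F
    have hLup : (F.map (fun A => C * cnt A)).sum ≤ n * m.factorial := by
      have h1 : (F.map (fun A => C * cnt A)).sum = C * (F.map cnt).sum :=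
        Multiset.sum_map_mul_left
      have h2 : (F.map cnt).sum ≤ m.factorial * s := by
        rw [← hswap]
        exact hW1
      calc (F.map (fun A => C * cnt A)).sum = C * (F.map cnt).sum := h1
        _ ≤ C * (m.factorial * s) := Nat.mul_le_mul_left _ h2
        _ = n * m.factorial := by rw [hcard]; ring
    -- lower bound
    have hLlo : n * m.factorial + 1 ≤ (F.map (fun A => C * cnt A)).sum := by
      have hdec : A₀ ::ₘ F.erase A₀ = F := Multiset.cons_erase hA₀
      have hcerase : Multiset.card (F.erase A₀) = n - 1 := by
        rw [Multiset.card_erase_of_mem hA₀]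
        rfl
      have hrest : ∀ x ∈ (F.erase A₀).map (fun A => C * cnt A), m.factorial ≤ x := by
        intro x hx
        obtain ⟨A, hA, rfl⟩ := Multiset.mem_map.1 hx
        exact hlow A (Multiset.mem_of_mem_erase hA)
      have hsmall := Multiset.card_nsmul_le_sum hrest
      rw [Multiset.card_map, hcerase, smul_eq_mul] at hsmall
      have hA0 : m.factorial + 1 ≤ C * cnt A₀ := hlow0
      calc n * m.factorial + 1
          = (m.factorial + 1) + (n - 1) * m.factorial := by
            have h9 : n - 1 + 1 = n := by omega
            nlinarith [h9, Nat.factorial_pos m]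
        _ ≤ C * cnt A₀ + ((F.erase A₀).map (fun A => C * cnt A)).sum := by
            exact Nat.add_le_add hA0 hsmall
        _ = ((A₀ ::ₘ F.erase A₀).map (fun A => C * cnt A)).sum := by
            rw [Multiset.map_cons, Multiset.sum_cons]
        _ = (F.map (fun A => C * cnt A)).sum := by rw [hdec]
    omega
  intro X hX Y hY
  by_cases hex : ∃ B ∈ F, Disjoint X B ∧ Disjoint Y B
  · left
    obtain ⟨B0, hB0F, hB0X, hB0Y⟩ := hex
    refine Multiset.filter_congr ?_
    intro Cc hCc
    constructor
    · intro hXC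
      have hCB : Cc = B0 := key X hX Cc hCc B0 hB0F hXC hB0X
      rw [hCB]; exact hB0Y
    · intro hYC
      have hCB : Cc = B0 := key Y hY Cc hCc B0 hB0F hYC hB0Y
      rw [hCB]; exact hB0X
  · right
    intro B hB hcon
    exact hex ⟨B, hB, hcon.1, hcon.2⟩
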